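/- (Proposition 7.3, correctness of the preprocessing conversion) For every bounded population computer P = (Q,δ,I,O,H) and every predicate φ decided by P, there exists a bounded population computer P' = (Q',δ',I',O',H') with I' in bijection with I that decides the corresponding predicate, such that: |Q'| ≤ |Q|+|I|+1, |H'| = |H|+1, Σ_{(r↦s)∈δ'}|r| ≤ Σ_{(r↦s)∈δ}|r| + 2|I|; no state of I' occurs in the right-hand side of any transition of δ'; every configuration with support contained in I' is terminal; and r(q) ≤ 1 for every q ∈ I' and every transition (r↦s) ∈ δ'. -/

import Mathlib

open scoped ENNReal Classical

namespace PaperPP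

/-- Population computers (Angluin-style generalization). -/
structure PopComputer (σ : Type) where
  Q : Finset σ
  δ : Finset (Multiset σ × Multiset σ)
  I : Finset σ
  O : Finset σ → Option Bool
  H : Multiset σ
  delta_mem : ∀ t ∈ δ, ∀ q ∈ t.1 + t.2, q ∈ Q
  delta_card : ∀ t ∈ δ, Multiset.card t.2 = Multiset.card t.1 ∧ 2 ≤ Multiset.card t.1
  delta_supp : ∀ t ∈ δ, ∃ a b : σ, ∀ q ∈ t.1, q = a ∨ q = b
  delta_fun : ∀ t ∈ δ, ∀ u ∈ δ, t.1 = u.1 → t.2 = u.2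
  I_sub : I ⊆ Q
  H_mem : ∀ q ∈ H, q ∈ Q ∧ q ∉ I

variable {σ : Type}

def Step (P : PopComputer σ) (C C' : Multiset σ) : Prop :=
  ∃ t ∈ P.δ, t.1 ≤ C ∧ C' = C - t.1 + t.2

def Reaches (P : PopComputer σ) : Multiset σ → Multiset σ → Prop :=
  Relation.ReflTransGen (Step P)

def Terminal (P : PopComputer σ) (C : Multiset σ) : Prop :=
  ∀ t ∈ P.δ, ¬ t.1 ≤ C

def IsInput (P : PopComputer σ) (C : Multiset σ) : Prop :=
  ∀ q ∈ C, q ∈ P.I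

def Initial (P : PopComputer σ) (CI C0 : Multiset σ) : Prop :=
  ∃ CH : Multiset σ, (∀ q ∈ CH, q ∈ P.H) ∧ P.H ≤ CH ∧ C0 = CI + CH

def ReachableConfig (P : PopComputer σ) (C : Multiset σ) : Prop :=
  ∃ CI C0, IsInput P CI ∧ Initial P CI C0 ∧ Reaches P C0 C

def IsRun (P : PopComputer σ) (f : ℕ → Multiset σ) : Prop :=
  ∀ i, Step P (f i) (f (i + 1)) ∨ (Terminal P (f i) ∧ f (i + 1) = f i)

def FairRun (P : PopComputer σ) (f : ℕ → Multiset σ) : Prop :=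
  IsRun P f ∧ ∀ C : Multiset σ, {i | Reaches P (f i) C}.Infinite → ∃ j, f j = C

def StabilizesTo [DecidableEq σ] (P : PopComputer σ) (f : ℕ → Multiset σ) (b : Bool) : Prop :=
  ∃ i, ∀ C, Reaches P (f i) C → P.O C.toFinset = some b

def HasOutput [DecidableEq σ] (P : PopComputer σ) (CI : Multiset σ) (b : Bool) : Prop :=
  ∀ C0 f, Initial P CI C0 → FairRun P f → f 0 = C0 → StabilizesTo P f b

def Decides [DecidableEq σ] (P : PopComputer σ) (φ : Multiset σ → Bool) : Prop :=
  ∀ CI, IsInput P CI → HasOutput P CI (φ CI)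

def Bounded (P : PopComputer σ) : Prop :=
  ¬ ∃ f : ℕ → Multiset σ,
      (∃ CI, IsInput P CI ∧ Initial P CI (f 0)) ∧ ∀ i, Step P (f i) (f (i + 1))

def Terminating (P : PopComputer σ) : Prop :=
  ∀ f : ℕ → Multiset σ, (∃ CI, IsInput P CI ∧ Initial P CI (f 0)) → FairRun P f →
    ∃ i, Terminal P (f i)

def Binary (P : PopComputer σ) : Prop := ∀ t ∈ P.δ, Multiset.card t.1 = 2

def ConsensusOutput [DecidableEq σ] (P : PopComputer σ) : Prop :=
  ∃ Q1 : Finset σ, Q1 ⊆ P.Q ∧ ∀ S : Finset σ, S ⊆ P.Q → S.Nonempty →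
    P.O S = if S ⊆ Q1 then some true else if S ⊆ P.Q \ Q1 then some false else none

def MarkedConsensusOutput [DecidableEq σ] (P : PopComputer σ) : Prop :=
  ∃ Q0 Q1 : Finset σ, Q0 ⊆ P.Q ∧ Q1 ⊆ P.Q ∧ Disjoint Q0 Q1 ∧
    ∀ S : Finset σ, S ⊆ P.Q → S.Nonempty →
      P.O S = if (S ∩ Q1).Nonempty ∧ S ∩ Q0 = ∅ then some true
        else if (S ∩ Q0).Nonempty ∧ S ∩ Q1 = ∅ then some false else none

def IsProtocol [DecidableEq σ] (P : PopComputer σ) : Prop :=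
  Binary P ∧ P.H = 0 ∧ ConsensusOutput P

/-! Boolean circuits, used to measure the size of output functions. -/

inductive Circ (α : Type) : Type where
  | inp : α → Circ α
  | tru : Circ α
  | fal : Circ α
  | neg : Circ α → Circ α
  | conj : Circ α → Circ α → Circ α
  | disj : Circ α → Circ α → Circ α

def Circ.eval {α : Type} (v : α → Bool) : Circ α → Bool
  | .inp a => v a
  | .tru => true
  | .fal => false
  | .neg c => !(Circ.eval v c)
  | .conj c d => Circ.eval v c && Circ.eval v d
  | .disj c d => Circ.eval v c || Circ.eval v d

def Circ.gates {α : Type} : Circ α → ℕ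
  | .inp _ => 1
  | .tru => 1
  | .fal => 1
  | .neg c => Circ.gates c + 1
  | .conj c d => Circ.gates c + Circ.gates d + 1
  | .disj c d => Circ.gates c + Circ.gates d + 1

noncomputable def outSize [DecidableEq σ] (P : PopComputer σ) : ℕ :=
  sInf {n | ∃ cd cv : Circ σ, Circ.gates cd + Circ.gates cv = n ∧
    ∀ S : Finset σ, S ⊆ P.Q →
      P.O S = if Circ.eval (fun q => decide (q ∈ S)) cd then
          some (Circ.eval (fun q => decide (q ∈ S)) cv) else none}

noncomputable def csize [DecidableEq σ] (P : PopComputer σ) : ℕ :=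
  P.Q.card + Multiset.card P.H + outSize P + ∑ t ∈ P.δ, Multiset.card t.1

noncomputable def asize [DecidableEq σ] (P : PopComputer σ) : ℕ :=
  P.Q.card + Multiset.card P.H + outSize P

/-! Probabilistic execution model. -/

def pairCount [DecidableEq σ] (C r : Multiset σ) : ℕ :=
  (Multiset.powersetCard 2 C).count r

noncomputable def stepKer [DecidableEq σ] (P : PopComputer σ) (C C' : Multiset σ) : ℝ≥0∞ :=
  (∑ t ∈ P.δ, if t.1 ≤ C ∧ C' = C - t.1 + t.2 then (pairCount C t.1 : ℝ≥0∞) else 0) /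
      (Nat.choose (Multiset.card C) 2 : ℝ≥0∞) +
    (if C' = C then
      1 - (∑ t ∈ P.δ, (pairCount C t.1 : ℝ≥0∞)) / (Nat.choose (Multiset.card C) 2 : ℝ≥0∞)
    else 0)

noncomputable def hitKer [DecidableEq σ] (P : PopComputer σ) (A : Set (Multiset σ))
    (C C' : Multiset σ) : ℝ≥0∞ :=
  if C ∈ A then (if C' = C then 1 else 0) else stepKer P C C'

noncomputable def hitIter [DecidableEq σ] (P : PopComputer σ) (A : Set (Multiset σ)) :
    ℕ → Multiset σ → Multiset σ → ℝ≥0∞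
  | 0, C, C' => if C' = C then 1 else 0
  | n + 1, C, C' => ∑' D : Multiset σ, hitIter P A n C D * hitKer P A D C'

/-- Expected hitting time of the set `A`, computed as `∑ₜ Pr[Xₜ ∉ A]` for the chain
absorbed at `A`. -/
noncomputable def expHit [DecidableEq σ] (P : PopComputer σ) (A : Set (Multiset σ))
    (C0 : Multiset σ) : ℝ≥0∞ :=
  ∑' n : ℕ, ∑' C : Multiset σ, if C ∈ A then 0 else hitIter P A n C0 C

def StableConfig [DecidableEq σ] (P : PopComputer σ) (C : Multiset σ) : Prop :=
  ∃ b : Bool, ∀ C', Reaches P C C' → P.O C'.toFinset = some b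

noncomputable def expTermination [DecidableEq σ] (P : PopComputer σ) (C0 : Multiset σ) : ℝ≥0∞ :=
  expHit P {C | Terminal P C} C0

noncomputable def expStabilization [DecidableEq σ] (P : PopComputer σ) (C0 : Multiset σ) : ℝ≥0∞ :=
  expHit P {C | StableConfig P C} C0

/-! Quantifier-free Presburger arithmetic. -/

inductive QFPA (v : ℕ) : Type where
  | threshold (a : Fin v → ℤ) (c : ℤ) : QFPA v
  | remainder (a : Fin v → ℤ) (θ : ℕ) (c : Fin θ) : QFPA v
  | not (φ : QFPA v) : QFPA v
  | and (φ ψ : QFPA v) : QFPA v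
  | or (φ ψ : QFPA v) : QFPA v

def QFPA.eval {v : ℕ} : QFPA v → (Fin v → ℕ) → Bool
  | .threshold a c, x => decide (c ≤ ∑ i, a i * (x i : ℤ))
  | .remainder a θ c, x => decide ((∑ i, a i * (x i : ℤ)) % (θ : ℤ) = ((c : ℕ) : ℤ))
  | .not φ, x => !(QFPA.eval φ x)
  | .and φ ψ, x => QFPA.eval φ x && QFPA.eval ψ x
  | .or φ ψ, x => QFPA.eval φ x || QFPA.eval ψ x

def zsize (z : ℤ) : ℕ := Nat.size z.natAbs + 1

def QFPA.fsize {v : ℕ} : QFPA v → ℕ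
  | .threshold a c => (∑ i, zsize (a i)) + zsize c + 1
  | .remainder a θ c => (∑ i, zsize (a i)) + Nat.size θ + Nat.size (c : ℕ) + 1
  | .not φ => QFPA.fsize φ + 1
  | .and φ ψ => QFPA.fsize φ + QFPA.fsize ψ + 1
  | .or φ ψ => QFPA.fsize φ + QFPA.fsize ψ + 1

def QFPA.double {v : ℕ} : QFPA v → QFPA (v + v)
  | .threshold a c =>
      .threshold (fun i => Fin.addCases (fun j => a j) (fun j => 2 * a j) i) c
  | .remainder a θ c =>
      .remainder (fun i => Fin.addCases (fun j => a j) (fun j => 2 * a j) i) θ c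
  | .not φ => .not (QFPA.double φ)
  | .and φ ψ => .and (QFPA.double φ) (QFPA.double ψ)
  | .or φ ψ => .or (QFPA.double φ) (QFPA.double ψ)

def inputConfig {v : ℕ} (lab : Fin v → σ) (x : Fin v → ℕ) : Multiset σ :=
  ∑ i : Fin v, Multiset.replicate (x i) (lab i)

def DecidesQFPA [DecidableEq σ] {v : ℕ} (P : PopComputer σ) (lab : Fin v → σ)
    (φ : QFPA v) : Prop :=
  Function.Injective lab ∧ P.I = Finset.univ.image lab ∧
    ∀ x : Fin v → ℕ, HasOutput P (inputConfig lab x) (QFPA.eval φ x)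

def DecidesQFPAFrom [DecidableEq σ] {v : ℕ} (P : PopComputer σ) (lab : Fin v → σ)
    (φ : QFPA v) (k : ℕ) : Prop :=
  Function.Injective lab ∧ P.I = Finset.univ.image lab ∧
    ∀ x : Fin v → ℕ, k ≤ ∑ i, x i → HasOutput P (inputConfig lab x) (QFPA.eval φ x)

/-! Potential functions and rapidness. -/

def mweight (w : σ → ℕ) (C : Multiset σ) : ℕ := (C.map w).sum

def IsPotential (P : PopComputer σ) (w : σ → ℕ) : Prop :=
  ∀ t ∈ P.δ, mweight w t.2 + (Multiset.card t.1 - 1) ≤ mweight w t.1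

def tmin [DecidableEq σ] (C r : Multiset σ) : ℕ :=
  if h : r.toFinset.Nonempty then r.toFinset.inf' h (fun q => C.count q) else 0

def speedOn [DecidableEq σ] (T : Finset (Multiset σ × Multiset σ)) (C : Multiset σ) : ℕ :=
  ∑ t ∈ T, (tmin C t.1) ^ 2

def speed [DecidableEq σ] (P : PopComputer σ) (C : Multiset σ) : ℕ := speedOn P.δ C

def RapidAt [DecidableEq σ] (P : PopComputer σ) (w : σ → ℕ) (α : ℝ) (C : Multiset σ) : Prop :=
  ∀ Cterm, Reaches P C Cterm → Terminal P Cterm →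
    ((mweight w C : ℝ) - (mweight w Cterm : ℝ)) ^ 2 / α ≤ (speed P C : ℝ)

def countIn [DecidableEq σ] (P : PopComputer σ) (C : Multiset σ) : ℕ :=
  ∑ q ∈ P.I, C.count q

def WellInitialised [DecidableEq σ] (P : PopComputer σ) (C : Multiset σ) : Prop :=
  ReachableConfig P C ∧ 3 * (countIn P C + Multiset.card P.H) ≤ 2 * Multiset.card C

def outdeg [DecidableEq σ] (P : PopComputer σ) (q : σ) : ℕ :=
  (P.δ.filter (fun t => q ∈ t.1)).card

def IsRapid [DecidableEq σ] (P : PopComputer σ) (α : ℝ) : Prop :=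
  (∃ w : σ → ℕ, IsPotential P w ∧ ∀ C, WellInitialised P C → RapidAt P w α C) ∧
  (∃ q0 : σ, ∀ q ∈ P.Q, q ≠ q0 → outdeg P q ≤ 2) ∧
  (∀ C : Multiset σ, IsInput P C → Terminal P C) ∧
  (∀ t ∈ P.δ, ∀ q ∈ P.I, t.1.count q ≤ 1 ∧ t.2.count q = 0)

def deltaGt [DecidableEq σ] (P : PopComputer σ) (w : σ → ℕ) :
    Finset (Multiset σ × Multiset σ) :=
  P.δ.filter (fun t => mweight w t.2 < mweight w t.1)

def deltaLt [DecidableEq σ] (P : PopComputer σ) (w : σ → ℕ) :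
    Finset (Multiset σ × Multiset σ) :=
  P.δ.filter (fun t => mweight w t.1 < mweight w t.2)

def RapidAtGt [DecidableEq σ] (P : PopComputer σ) (w : σ → ℕ) (α : ℝ) (C : Multiset σ) : Prop :=
  ∀ Cterm, Reaches P C Cterm → Terminal P Cterm →
    ((mweight w C : ℝ) - (mweight w Cterm : ℝ)) ^ 2 / α ≤ (speedOn (deltaGt P w) C : ℝ)

def GroupRapidAt [DecidableEq σ] (P : PopComputer σ) {e : ℕ} (w : Fin e → σ → ℕ) (α : ℝ)
    (C : Multiset σ) : Prop :=
  Terminal P C ∨ ∃ i : Fin e,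
    RapidAtGt P (w i) α C ∧
    (∃ t ∈ deltaGt P (w i), t.1 ≤ C) ∧
    (∀ C', Reaches P C C' → ∀ t ∈ deltaLt P (w i), ¬ t.1 ≤ C')

/-- Refinement between computers over the same state space. -/
def Refines [DecidableEq σ] (P' P : PopComputer σ) (π : Multiset σ → Multiset σ) : Prop :=
  (∀ C D, ReachableConfig P' C → ReachableConfig P' D → Step P' C D →
    Reaches P (π C) (π D)) ∧
  (P.I = P'.I ∧ ∀ CI C, IsInput P' CI → Initial P' CI C →
    ((∃ DI, IsInput P DI ∧ Initial P DI (π C)) ∧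
      ∀ q ∈ P.I, (π C).count q = C.count q)) ∧
  (∀ C, ReachableConfig P' C → Terminal P' C →
    Terminal P (π C) ∧ P.O (π C).toFinset = P'.O C.toFinset)

/-! ### Auxiliary development for Proposition 7.3 -/

section Prop73
variable {σ : Type} [DecidableEq σ]
set_option linter.unusedSectionVars false

/-- From a terminal configuration, only the configuration itself is reachable. -/
lemma terminal_reaches_eq {P : PopComputer σ} {C C' : Multiset σ}
    (ht : Terminal P C) (h : Reaches P C C') : C' = C := by
  rcases Relation.ReflTransGen.cases_head h with h | ⟨D, hD, _⟩
  · exact h.symm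
  · rcases hD with ⟨t, htδ, hle, _⟩
    exact absurd hle (ht t htδ)

lemma isRun_reaches {P : PopComputer σ} {f : ℕ → Multiset σ} (hf : IsRun P f) :
    ∀ i j, i ≤ j → Reaches P (f i) (f j) := by
  intro i j hij
  induction j with
  | zero => cases Nat.le_zero.mp hij; exact Relation.ReflTransGen.refl
  | succ j ih =>
    rcases Nat.lt_or_ge i (j+1) with h | h
    · have hr := ih (Nat.lt_succ_iff.mp h)
      rcases hf j with hs | ⟨_, he⟩
      · exact hr.tail hs
      · rwa [he]
    · have : i = j + 1 := le_antisymm hij h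
      subst this; exact Relation.ReflTransGen.refl

/-- Prepend a reachability path to an infinite step-sequence. -/
lemma prepend_inf_run {P : PopComputer σ} {A B : Multiset σ}
    (h : Reaches P A B) (f : ℕ → Multiset σ) (hf0 : f 0 = B)
    (hf : ∀ i, Step P (f i) (f (i+1))) :
    ∃ g : ℕ → Multiset σ, g 0 = A ∧ ∀ i, Step P (g i) (g (i+1)) := by
  induction h using Relation.ReflTransGen.head_induction_on with
  | refl => exact ⟨f, hf0, hf⟩
  | @head a c h' _ ih =>
    obtain ⟨g, hg0, hg⟩ := ih
    refine ⟨fun n => Nat.rec a (fun n _ => g n) n, rfl, ?_⟩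
    intro i
    cases i with
    | zero => simpa [hg0] using h'
    | succ i => exact hg i

/-- From a path ending in a terminal configuration, build an (eventually constant) run. -/
lemma exists_run_to_terminal {P : PopComputer σ} {A D : Multiset σ}
    (h : Reaches P A D) (hD : Terminal P D) :
    ∃ (f : ℕ → Multiset σ) (N : ℕ), IsRun P f ∧ f 0 = A ∧ ∀ j, N ≤ j → f j = D := by
  induction h using Relation.ReflTransGen.head_induction_on with
  | refl =>
    exact ⟨fun _ => D, 0, fun i => Or.inr ⟨hD, rfl⟩, rfl, fun _ _ => rfl⟩
  | @head a c h' _ ih =>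
    obtain ⟨f, N, hrun, hf0, hfD⟩ := ih
    refine ⟨fun n => Nat.rec a (fun n _ => f n) n, N + 1, ?_, rfl, ?_⟩
    · intro i
      cases i with
      | zero => exact Or.inl (by simpa [hf0] using h')
      | succ i => exact hrun i
    · intro j hj
      cases j with
      | zero => omega
      | succ j => exact hfD j (by omega)

/-- Such a run is fair. -/
lemma fair_of_eventually_terminal {P : PopComputer σ} {f : ℕ → Multiset σ} {N : ℕ}
    {D : Multiset σ} (hrun : IsRun P f) (hD : Terminal P D) (hfD : ∀ j, N ≤ j → f j = D) :
    FairRun P f := by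
  refine ⟨hrun, fun C hC => ?_⟩
  obtain ⟨i, hi, hiN⟩ := hC.exists_gt N
  simp only [Set.mem_setOf_eq] at hi
  have hfi : f i = D := hfD i (le_of_lt hiN)
  have : C = D := terminal_reaches_eq hD (by rwa [hfi] at hi)
  exact ⟨i, by rw [hfi, this]⟩

end Prop73
section Prop73b
variable {σ : Type} [DecidableEq σ]
set_option linter.unusedSectionVars false

/-- Normalize `Multiset.sub` across different decidability instances. -/
lemma sub_norm {α : Type} (i j : DecidableEq α) (s t : Multiset α) :
    @HSub.hSub _ _ _ (@instHSub _ (@Multiset.instSub α i)) s t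
      = @HSub.hSub _ _ _ (@instHSub _ (@Multiset.instSub α j)) s t := by
  have h : i = j := Subsingleton.elim i j
  subst h; rfl

/-- Input embedding. -/
def bb : σ → σ ⊕ σ ⊕ Unit := Sum.inl
/-- Working-state embedding. -/
def ee : σ → σ ⊕ σ ⊕ Unit := fun q => Sum.inr (Sum.inl q)
/-- The extra helper state. -/
def dd : σ ⊕ σ ⊕ Unit := Sum.inr (Sum.inr ())

lemma ee_inj : Function.Injective (ee (σ := σ)) := by
  intro a b h; simpa [ee] using h

lemma bb_ne_ee (p q : σ) : bb p ≠ ee q := by simp [bb, ee]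
lemma bb_ne_dd (p : σ) : bb p ≠ dd := by simp [bb, dd]
lemma ee_ne_dd (p : σ) : ee p ≠ dd := by simp [ee, dd]

def gg : σ ⊕ σ ⊕ Unit → Option σ
  | Sum.inl q => some q
  | Sum.inr (Sum.inl q) => some q
  | Sum.inr (Sum.inr _) => none

/-- Projection back to the original state space. -/
def pro (C : Multiset (σ ⊕ σ ⊕ Unit)) : Multiset σ := C.filterMap gg

lemma count_pro (q : σ) (C : Multiset (σ ⊕ σ ⊕ Unit)) :
    (pro C).count q = C.count (bb q) + C.count (ee q) := by
  induction C using Multiset.induction with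
  | empty => simp [pro]
  | cons x C ih =>
    simp only [pro, bb, ee] at ih ⊢
    match x with
    | Sum.inl p =>
      rw [Multiset.filterMap_cons_some gg _ _ (show gg (Sum.inl p) = some p from rfl)]
      simp only [Multiset.count_cons, ih]
      by_cases h : q = p <;> simp [h] <;> omega
    | Sum.inr (Sum.inl p) =>
      rw [Multiset.filterMap_cons_some gg _ _ (show gg (Sum.inr (Sum.inl p)) = some p from rfl)]
      simp only [Multiset.count_cons, ih]
      by_cases h : q = p <;> simp [h] <;> omega
    | Sum.inr (Sum.inr u) =>
      rw [Multiset.filterMap_cons_none _ _ (show gg (Sum.inr (Sum.inr u)) = none from rfl)]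
      simp only [Multiset.count_cons, ih]
      simp

lemma pro_add (A B : Multiset (σ ⊕ σ ⊕ Unit)) : pro (A + B) = pro A + pro B := by
  ext q; simp [count_pro, Multiset.count_add]; ring

lemma pro_map_bb (A : Multiset σ) : pro (A.map bb) = A := by
  ext q
  rw [count_pro, Multiset.count_map_eq_count' bb _ (fun a b h => by simpa [bb] using h)]
  have : (A.map bb).count (ee q) = 0 := by
    rw [Multiset.count_eq_zero]
    intro h; rcases Multiset.mem_map.mp h with ⟨a, _, ha⟩
    exact bb_ne_ee a q ha
  omega

lemma pro_map_ee (A : Multiset σ) : pro (A.map ee) = A := by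
  ext q
  rw [count_pro, Multiset.count_map_eq_count' ee _ ee_inj]
  have : (A.map ee).count (bb q) = 0 := by
    rw [Multiset.count_eq_zero]
    intro h; rcases Multiset.mem_map.mp h with ⟨a, _, ha⟩
    exact bb_ne_ee q a ha.symm
  omega

lemma pro_mono {A B : Multiset (σ ⊕ σ ⊕ Unit)} (h : A ≤ B) : pro A ≤ pro B := by
  obtain ⟨C, rfl⟩ := Multiset.le_iff_exists_add.mp h
  rw [pro_add]; exact Multiset.le_add_right _ _

lemma pro_sub {A B : Multiset (σ ⊕ σ ⊕ Unit)} (h : B ≤ A) : pro (A - B) = pro A - pro B := by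
  have h1 : A - B + B = A := tsub_add_cancel_of_le h
  have := pro_add (A - B) B
  rw [h1] at this
  rw [this]; simp

lemma pro_pair (q : σ) : pro ({bb q, dd} : Multiset (σ ⊕ σ ⊕ Unit)) = {q} := by
  show pro (bb q ::ₘ dd ::ₘ 0) = {q}
  rw [pro, Multiset.filterMap_cons_some gg _ _ (show gg (bb q) = some q from rfl),
    Multiset.filterMap_cons_none _ _ (show gg dd = none from rfl), Multiset.filterMap_zero, Multiset.cons_zero]

lemma pro_pair' (q : σ) : pro ({ee q, dd} : Multiset (σ ⊕ σ ⊕ Unit)) = {q} := by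
  show pro (ee q ::ₘ dd ::ₘ 0) = {q}
  rw [pro, Multiset.filterMap_cons_some gg _ _ (show gg (ee q) = some q from rfl),
    Multiset.filterMap_cons_none _ _ (show gg dd = none from rfl), Multiset.filterMap_zero, Multiset.cons_zero]

/-- Number of unconverted input tokens. -/
def nu (C : Multiset (σ ⊕ σ ⊕ Unit)) : ℕ := C.countP (fun x => x.isLeft)

lemma nu_add (A B : Multiset (σ ⊕ σ ⊕ Unit)) : nu (A + B) = nu A + nu B :=
  Multiset.countP_add _ _ _

lemma nu_sub {A B : Multiset (σ ⊕ σ ⊕ Unit)} (h : B ≤ A) : nu (A - B) = nu A - nu B :=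
  Multiset.countP_sub h _

lemma nu_map_ee (A : Multiset σ) : nu (A.map ee) = 0 := by
  rw [nu, Multiset.countP_eq_zero]
  intro a ha
  rcases Multiset.mem_map.mp ha with ⟨b, _, rfl⟩
  simp [ee]

lemma nu_pair (q : σ) : nu ({bb q, dd} : Multiset (σ ⊕ σ ⊕ Unit)) = 1 := by
  show nu (bb q ::ₘ dd ::ₘ 0) = 1
  simp [nu, bb, dd, Multiset.countP_cons, ← Multiset.cons_zero, Multiset.countP_zero]

lemma nu_pair' (q : σ) : nu ({ee q, dd} : Multiset (σ ⊕ σ ⊕ Unit)) = 0 := by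
  show nu (ee q ::ₘ dd ::ₘ 0) = 0
  simp [nu, ee, dd, Multiset.countP_cons, ← Multiset.cons_zero, Multiset.countP_zero]

lemma nu_le_of_le {A B : Multiset (σ ⊕ σ ⊕ Unit)} (h : A ≤ B) : nu A ≤ nu B := by
  obtain ⟨C, rfl⟩ := Multiset.le_iff_exists_add.mp h
  rw [nu_add]; omega

lemma pair_le_iff (q : σ) (C : Multiset (σ ⊕ σ ⊕ Unit)) :
    ({bb q, dd} : Multiset (σ ⊕ σ ⊕ Unit)) ≤ C ↔ bb q ∈ C ∧ dd ∈ C := by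
  constructor
  · intro h
    constructor
    · exact Multiset.mem_of_le h (by simp)
    · exact Multiset.mem_of_le h (by simp)
  · rintro ⟨h1, h2⟩
    rw [Multiset.le_iff_count]
    intro a
    show Multiset.count a (bb q ::ₘ dd ::ₘ 0) ≤ _
    simp only [Multiset.count_cons, Multiset.count_zero]
    by_cases ha : a = bb q
    · subst ha
      simp [Ne.symm (bb_ne_dd q)]
      exact Multiset.one_le_count_iff_mem.mpr h1
    · by_cases hb : a = dd
      · subst hb
        simp [bb_ne_dd q, ha]
        exact Multiset.one_le_count_iff_mem.mpr h2
      · simp [ha, hb]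

end Prop73b
section Prop73c
variable {σ : Type} [DecidableEq σ]
set_option linter.unusedSectionVars false

/-- The preprocessed computer. -/
def conv (P : PopComputer σ) : PopComputer (σ ⊕ σ ⊕ Unit) where
  Q := P.Q.image ee ∪ P.I.image bb ∪ {dd}
  δ := P.δ.image (fun t => (t.1.map ee, t.2.map ee)) ∪
       P.I.image (fun q => (({bb q, dd} : Multiset _), ({ee q, dd} : Multiset _)))
  I := P.I.image bb
  O := fun S => P.O (pro S.val).toFinset
  H := P.H.map ee + {dd}
  delta_mem := by
    intro t ht q hq
    simp only [Finset.mem_union, Finset.mem_image] at ht ⊢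
    rcases ht with ⟨u, hu, rfl⟩ | ⟨p, hp, rfl⟩
    · simp only [Multiset.mem_add, Multiset.mem_map] at hq
      rcases hq with ⟨a, ha, rfl⟩ | ⟨a, ha, rfl⟩ <;>
        exact Or.inl (Or.inl ⟨a, P.delta_mem u hu a (by simp [ha]), rfl⟩)
    · simp only [Multiset.mem_add, Multiset.insert_eq_cons, Multiset.mem_cons,
        Multiset.mem_singleton] at hq
      rcases hq with (rfl | rfl) | (rfl | rfl)
      · exact Or.inl (Or.inr ⟨p, hp, rfl⟩)
      · simp
      · exact Or.inl (Or.inl ⟨p, P.I_sub hp, rfl⟩)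
      · simp
  delta_card := by
    intro t ht
    simp only [Finset.mem_union, Finset.mem_image] at ht
    rcases ht with ⟨u, hu, rfl⟩ | ⟨p, hp, rfl⟩
    · simpa using P.delta_card u hu
    · simp
  delta_supp := by
    intro t ht
    simp only [Finset.mem_union, Finset.mem_image] at ht
    rcases ht with ⟨u, hu, rfl⟩ | ⟨p, hp, rfl⟩
    · obtain ⟨a, b, hab⟩ := P.delta_supp u hu
      refine ⟨ee a, ee b, ?_⟩
      intro q hq
      simp only [Multiset.mem_map] at hq
      obtain ⟨x, hx, rfl⟩ := hq
      rcases hab x hx with rfl | rfl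
      · exact Or.inl rfl
      · exact Or.inr rfl
    · refine ⟨bb p, dd, ?_⟩
      intro q hq
      simp only [Multiset.insert_eq_cons, Multiset.mem_cons, Multiset.mem_singleton] at hq
      tauto
  delta_fun := by
    intro t ht u hu h1
    simp only [Finset.mem_union, Finset.mem_image] at ht hu
    have hddmem : ∀ (s : Multiset σ), dd ∉ s.map ee := by
      intro s h
      rcases Multiset.mem_map.mp h with ⟨a, _, ha⟩
      exact ee_ne_dd a ha
    rcases ht with ⟨v, hv, rfl⟩ | ⟨p, hp, rfl⟩ <;> rcases hu with ⟨w, hw, rfl⟩ | ⟨r, hr, rfl⟩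
    · simp only at h1 ⊢
      exact congrArg _ (P.delta_fun v hv w hw (Multiset.map_injective ee_inj h1))
    · exfalso
      simp only at h1
      have : dd ∈ Multiset.map ee v.1 := by rw [h1]; simp
      exact hddmem _ this
    · exfalso
      simp only at h1
      have : dd ∈ Multiset.map ee w.1 := by rw [← h1]; simp
      exact hddmem _ this
    · simp only at h1 ⊢
      have : bb p = bb r := by
        have := congrArg (Multiset.count (bb p)) h1
        simp only [Multiset.insert_eq_cons, Multiset.count_cons, Multiset.count_singleton] at this
        by_contra hne
        simp [Ne.symm (bb_ne_dd p), hne, Ne.symm (bb_ne_dd r)] at this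
      have : p = r := by simpa [bb] using this
      subst this; rfl
  I_sub := by
    intro q hq
    exact Finset.mem_union_left _ (Finset.mem_union_right _ hq)
  H_mem := by
    intro q hq
    simp only [Multiset.mem_add, Multiset.mem_map, Multiset.mem_singleton] at hq
    rcases hq with ⟨a, ha, rfl⟩ | rfl
    · constructor
      · exact Finset.mem_union_left _ (Finset.mem_union_left _
          (Finset.mem_image_of_mem _ (P.H_mem a ha).1))
      · intro h
        rcases Finset.mem_image.mp h with ⟨b, _, hb⟩
        exact bb_ne_ee b a hb
    · constructor
      · exact Finset.mem_union_right _ (by simp)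
      · intro h
        rcases Finset.mem_image.mp h with ⟨b, _, hb⟩
        exact bb_ne_dd b hb

lemma mem_conv_delta {P : PopComputer σ} {t : Multiset (σ ⊕ σ ⊕ Unit) × Multiset (σ ⊕ σ ⊕ Unit)} :
    t ∈ (conv P).δ ↔ (∃ u ∈ P.δ, t = (u.1.map ee, u.2.map ee)) ∨
      (∃ q ∈ P.I, t = (({bb q, dd} : Multiset _), ({ee q, dd} : Multiset _))) := by
  simp only [conv, Finset.mem_union, Finset.mem_image]
  constructor
  · rintro (⟨u, hu, rfl⟩ | ⟨q, hq, rfl⟩)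
    · exact Or.inl ⟨u, hu, rfl⟩
    · exact Or.inr ⟨q, hq, rfl⟩
  · rintro (⟨u, hu, rfl⟩ | ⟨q, hq, rfl⟩)
    · exact Or.inl ⟨u, hu, rfl⟩
    · exact Or.inr ⟨q, hq, rfl⟩

end Prop73c
section Prop73d
variable {σ : Type} [DecidableEq σ]
set_option linter.unusedSectionVars false

/-- Invariant maintained along runs of the converted computer. -/
def Inv (P : PopComputer σ) (C : Multiset (σ ⊕ σ ⊕ Unit)) : Prop :=
  (∀ q : σ, bb q ∈ C → q ∈ P.I) ∧ dd ∈ C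

lemma count_dd_map_ee (A : Multiset σ) : (A.map ee).count dd = 0 := by
  rw [Multiset.count_eq_zero]
  intro h
  rcases Multiset.mem_map.mp h with ⟨a, _, ha⟩
  exact ee_ne_dd a ha

/-- Case analysis for a step of the converted computer. -/
lemma step_conv {P : PopComputer σ} {C C' : Multiset (σ ⊕ σ ⊕ Unit)}
    (h : Step (conv P) C C') :
    ((Step P (pro C) (pro C') ∧ nu C' = nu C) ∨ (pro C' = pro C ∧ nu C' + 1 = nu C)) ∧
      (Inv P C → Inv P C') := by
  obtain ⟨t, ht, hle, rfl⟩ := h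
  simp only [sub_norm _ (inferInstance : DecidableEq (σ ⊕ σ ⊕ Unit))]
  rcases mem_conv_delta.mp ht with ⟨u, hu, rfl⟩ | ⟨q, hq, rfl⟩
  · simp only at hle ⊢
    have hple : u.1 ≤ pro C := by
      have := pro_mono hle; rwa [pro_map_ee] at this
    constructor
    · left
      constructor
      · refine ⟨u, hu, hple, ?_⟩
        simp only [sub_norm _ (inferInstance : DecidableEq σ)]
        rw [pro_add, pro_sub hle, pro_map_ee, pro_map_ee]
      · rw [nu_add, nu_sub hle, nu_map_ee, nu_map_ee]; omega
    · rintro ⟨hL, hdd⟩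
      constructor
      · intro p hp
        rcases Multiset.mem_add.mp hp with hp | hp
        · exact hL p (Multiset.mem_of_le tsub_le_self hp)
        · exact absurd (Multiset.mem_map.mp hp) (by rintro ⟨a, _, ha⟩; exact bb_ne_ee p a ha.symm)
      · rw [Multiset.mem_add]
        left
        rw [← Multiset.one_le_count_iff_mem, Multiset.count_sub, count_dd_map_ee]
        simpa [Multiset.one_le_count_iff_mem] using hdd
  · simp only at hle ⊢
    have hqle : ({q} : Multiset σ) ≤ pro C := by
      have := pro_mono hle; rwa [pro_pair] at this
    constructor
    · right
      constructor
      · rw [pro_add, pro_sub hle, pro_pair, pro_pair']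
        have h2 : pro C - {q} + {q} = pro C := tsub_add_cancel_of_le hqle
        exact h2
      · rw [nu_add, nu_sub hle, nu_pair, nu_pair']
        have : 1 ≤ nu C := by
          have := nu_le_of_le hle; rwa [nu_pair] at this
        omega
    · rintro ⟨hL, hdd⟩
      constructor
      · intro p hp
        rcases Multiset.mem_add.mp hp with hp | hp
        · exact hL p (Multiset.mem_of_le tsub_le_self hp)
        · exfalso
          simp only [Multiset.insert_eq_cons, Multiset.mem_cons, Multiset.mem_singleton] at hp
          rcases hp with hp | hp
          · exact bb_ne_ee p q hp
          · exact bb_ne_dd p hp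
      · rw [Multiset.mem_add]
        right
        simp [Multiset.insert_eq_cons]

lemma inv_init {P : PopComputer σ} {CI C0 : Multiset (σ ⊕ σ ⊕ Unit)}
    (hin : IsInput (conv P) CI) (h0 : Initial (conv P) CI C0) : Inv P C0 := by
  obtain ⟨CH, hCH, hHle, rfl⟩ := h0
  constructor
  · intro q hq
    rcases Multiset.mem_add.mp hq with hq | hq
    · have := hin _ hq
      simp only [conv, Finset.mem_image] at this
      obtain ⟨p, hp, hpq⟩ := this
      have : p = q := by simpa [bb] using hpq
      subst this; exact hp
    · have := hCH _ hq
      simp only [conv, Multiset.mem_add, Multiset.mem_map, Multiset.mem_singleton] at this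
      rcases this with ⟨a, _, ha⟩ | h
      · exact absurd ha.symm (bb_ne_ee q a)
      · exact absurd h (bb_ne_dd q)
  · rw [Multiset.mem_add]
    right
    refine Multiset.mem_of_le hHle ?_
    simp [conv]

lemma initial_pro {P : PopComputer σ} {CI C0 : Multiset (σ ⊕ σ ⊕ Unit)}
    (hin : IsInput (conv P) CI) (h0 : Initial (conv P) CI C0) :
    IsInput P (pro CI) ∧ Initial P (pro CI) (pro C0) := by
  obtain ⟨CH, hCH, hHle, rfl⟩ := h0
  constructor
  · intro q hq
    rcases (Multiset.mem_filterMap _ _).mp hq with ⟨x, hx, hgx⟩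
    have := hin _ hx
    simp only [conv, Finset.mem_image] at this
    obtain ⟨p, hp, rfl⟩ := this
    have : q = p := by simpa [bb, gg] using hgx.symm
    subst this; exact hp
  · refine ⟨pro CH, ?_, ?_, by rw [pro_add]⟩
    · intro q hq
      rcases (Multiset.mem_filterMap _ _).mp hq with ⟨x, hx, hgx⟩
      have := hCH _ hx
      simp only [conv, Multiset.mem_add, Multiset.mem_map, Multiset.mem_singleton] at this
      rcases this with ⟨a, ha, rfl⟩ | rfl
      · have : q = a := by simpa [ee, gg] using hgx.symm
        subst this; exact ha
      · simp [dd, gg] at hgx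
    · have h1 : pro ((conv P).H) ≤ pro CH := pro_mono hHle
      have h2 : pro ((conv P).H) = P.H := by
        show pro (P.H.map ee + {dd}) = P.H
        rw [pro_add, pro_map_ee]
        have : pro ({dd} : Multiset (σ ⊕ σ ⊕ Unit)) = 0 := by
          rw [← Multiset.cons_zero, pro, Multiset.filterMap_cons_none _ _
            (show gg dd = none from rfl), Multiset.filterMap_zero]
        rw [this, add_zero]
      rwa [h2] at h1

/-- A terminal configuration satisfying the invariant contains no input states,
and projects to a terminal configuration of `P`. -/
lemma terminal_conv {P : PopComputer σ} {C : Multiset (σ ⊕ σ ⊕ Unit)}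
    (hI : Inv P C) (ht : Terminal (conv P) C) :
    (∀ q : σ, bb q ∉ C) ∧ Terminal P (pro C) := by
  have hnobb : ∀ q : σ, bb q ∉ C := by
    intro q hq
    have hqI : q ∈ P.I := hI.1 q hq
    have htdelta : (({bb q, dd} : Multiset _), ({ee q, dd} : Multiset _)) ∈ (conv P).δ :=
      mem_conv_delta.mpr (Or.inr ⟨q, hqI, rfl⟩)
    exact ht _ htdelta ((pair_le_iff q C).mpr ⟨hq, hI.2⟩)
  refine ⟨hnobb, ?_⟩
  intro t htδ hle
  have hmap : t.1.map ee ≤ C := by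
    rw [Multiset.le_iff_count]
    intro x
    match x with
    | Sum.inl p =>
      have : Sum.inl p ∉ t.1.map ee := by
        intro h; rcases Multiset.mem_map.mp h with ⟨a, _, ha⟩; exact bb_ne_ee p a ha.symm
      simp [Multiset.count_eq_zero.mpr this]
    | Sum.inr (Sum.inl p) =>
      rw [show (Sum.inr (Sum.inl p) : σ ⊕ σ ⊕ Unit) = ee p from rfl,
        Multiset.count_map_eq_count' ee _ ee_inj]
      have h1 : t.1.count p ≤ (pro C).count p := Multiset.le_iff_count.mp hle p
      have h2 : C.count (bb p) = 0 := Multiset.count_eq_zero.mpr (hnobb p)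
      rw [count_pro] at h1
      omega
    | Sum.inr (Sum.inr u) =>
      have : Sum.inr (Sum.inr u) ∉ t.1.map ee := by
        intro h; rcases Multiset.mem_map.mp h with ⟨a, _, ha⟩
        cases u; exact ee_ne_dd a ha
      simp [Multiset.count_eq_zero.mpr this]
  exact ht _ (mem_conv_delta.mpr (Or.inl ⟨t, htδ, rfl⟩)) hmap

lemma conv_output {P : PopComputer σ} (C : Multiset (σ ⊕ σ ⊕ Unit)) :
    (conv P).O C.toFinset = P.O (pro C).toFinset := by
  show P.O (pro C.toFinset.val).toFinset = P.O (pro C).toFinset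
  congr 1
  ext q
  simp [pro, Multiset.mem_filterMap]

end Prop73d
section Prop73e
variable {σ : Type} [DecidableEq σ]
set_option linter.unusedSectionVars false

lemma bounded_conv {P : PopComputer σ} (hb : Bounded P) : Bounded (conv P) := by
  rintro ⟨f, ⟨CI, hin, hinit⟩, hstep⟩
  have hsc : ∀ i, (Step P (pro (f i)) (pro (f (i+1))) ∧ nu (f (i+1)) = nu (f i)) ∨
      (pro (f (i+1)) = pro (f i) ∧ nu (f (i+1)) + 1 = nu (f i)) :=
    fun i => (step_conv (hstep i)).1
  have hanti : ∀ i j, i ≤ j → nu (f j) ≤ nu (f i) := by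
    intro i j hij
    induction j with
    | zero => cases Nat.le_zero.mp hij; rfl
    | succ j ih =>
      rcases Nat.lt_or_ge i (j+1) with h | h
      · have := ih (Nat.lt_succ_iff.mp h)
        rcases hsc j with ⟨_, h2⟩ | ⟨_, h2⟩ <;> omega
      · have : i = j + 1 := le_antisymm hij h
        subst this; rfl
  have hne : (Set.range fun i => nu (f i)).Nonempty := ⟨nu (f 0), ⟨0, rfl⟩⟩
  obtain ⟨N, hN⟩ := Nat.sInf_mem hne
  have hmin : ∀ i, sInf (Set.range fun i => nu (f i)) ≤ nu (f i) :=
    fun i => Nat.sInf_le ⟨i, rfl⟩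
  have hSt : ∀ i, N ≤ i → Step P (pro (f i)) (pro (f (i+1))) := by
    intro i hi
    rcases hsc i with ⟨h1, _⟩ | ⟨_, h2⟩
    · exact h1
    · exfalso
      have ha : nu (f i) ≤ nu (f N) := hanti N i hi
      have hb1 := hmin (i+1)
      have hN' : nu (f N) = sInf (Set.range fun i => nu (f i)) := hN
      omega
  have hreach : ∀ n, Reaches P (pro (f 0)) (pro (f n)) := by
    intro n
    induction n with
    | zero => exact Relation.ReflTransGen.refl
    | succ n ih =>
      rcases hsc n with ⟨h1, _⟩ | ⟨h1, _⟩
      · exact ih.tail h1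
      · rwa [h1]
  obtain ⟨hinP, hinitP⟩ := initial_pro hin hinit
  obtain ⟨g, hg0, hg⟩ := prepend_inf_run (hreach N) (fun i => pro (f (N + i)))
    rfl (fun i => hSt (N + i) (Nat.le_add_right _ _))
  exact hb ⟨g, ⟨pro CI, hinP, by rwa [hg0]⟩, hg⟩

lemma inv_run {P : PopComputer σ} {f : ℕ → Multiset (σ ⊕ σ ⊕ Unit)}
    (hrun : IsRun (conv P) f) (h0 : Inv P (f 0)) : ∀ i, Inv P (f i) := by
  intro i
  induction i with
  | zero => exact h0
  | succ i ih =>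
    rcases hrun i with hs | ⟨_, he⟩
    · exact (step_conv hs).2 ih
    · rwa [he]

lemma pro_run_reaches {P : PopComputer σ} {f : ℕ → Multiset (σ ⊕ σ ⊕ Unit)}
    (hrun : IsRun (conv P) f) : ∀ i, Reaches P (pro (f 0)) (pro (f i)) := by
  intro i
  induction i with
  | zero => exact Relation.ReflTransGen.refl
  | succ i ih =>
    rcases hrun i with hs | ⟨_, he⟩
    · rcases (step_conv hs).1 with ⟨h1, _⟩ | ⟨h1, _⟩
      · exact ih.tail h1
      · rwa [h1]
    · rwa [he]

lemma run_terminates_conv {P : PopComputer σ} (hb' : Bounded (conv P))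
    {CI : Multiset (σ ⊕ σ ⊕ Unit)} {f : ℕ → Multiset (σ ⊕ σ ⊕ Unit)}
    (hin : IsInput (conv P) CI) (hinit : Initial (conv P) CI (f 0))
    (hrun : IsRun (conv P) f) :
    ∃ N, Terminal (conv P) (f N) ∧ ∀ C, Reaches (conv P) (f N) C → C = f N := by
  have hterm : ∃ N, Terminal (conv P) (f N) := by
    by_contra h
    push_neg at h
    have hstep : ∀ i, Step (conv P) (f i) (f (i+1)) := by
      intro i
      rcases hrun i with hs | ⟨ht, _⟩
      · exact hs
      · exact absurd ht (h i)
    exact hb' ⟨f, ⟨CI, hin, hinit⟩, hstep⟩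
  obtain ⟨N, hN⟩ := hterm
  exact ⟨N, hN, fun C hC => terminal_reaches_eq hN hC⟩

end Prop73e
/-- Proposition 7.3: correctness of the preprocessing conversion. -/
theorem stmt12 (σ : Type) [DecidableEq σ] (P : PopComputer σ)
    (hb : Bounded P) (φ : Multiset σ → Bool) (hdec : Decides P φ) :
    ∃ (P' : PopComputer (σ ⊕ σ ⊕ Unit)) (β : σ → σ ⊕ σ ⊕ Unit),
      Set.InjOn β ↑P.I ∧ P'.I = P.I.image β ∧
      Bounded P' ∧
      (∀ CI : Multiset σ, IsInput P CI → HasOutput P' (CI.map β) (φ CI)) ∧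
      P'.Q.card ≤ P.Q.card + P.I.card + 1 ∧
      Multiset.card P'.H = Multiset.card P.H + 1 ∧
      (∑ t ∈ P'.δ, Multiset.card t.1) ≤ (∑ t ∈ P.δ, Multiset.card t.1) + 2 * P.I.card ∧
      (∀ t ∈ P'.δ, ∀ q ∈ P'.I, q ∉ t.2) ∧
      (∀ C : Multiset (σ ⊕ σ ⊕ Unit), IsInput P' C → Terminal P' C) ∧
      (∀ t ∈ P'.δ, ∀ q ∈ P'.I, t.1.count q ≤ 1) := by
  refine ⟨conv P, bb, ?_, rfl, bounded_conv hb, ?_, ?_, ?_, ?_, ?_, ?_, ?_⟩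
  · -- injectivity
    intro a _ b _ h
    simpa [bb] using h
  · -- correctness
    intro CI hCI
    intro C0 f hinit hfair hf0
    subst hf0
    have hin' : IsInput (conv P) (CI.map bb) := by
      intro x hx
      rcases Multiset.mem_map.mp hx with ⟨a, ha, rfl⟩
      exact Finset.mem_image_of_mem bb (hCI a ha)
    obtain ⟨N, hterm, honly⟩ :=
      run_terminates_conv (bounded_conv hb) hin' hinit hfair.1
    have hInvN : Inv P (f N) := inv_run hfair.1 (inv_init hin' hinit) N
    obtain ⟨hnobb, htermP⟩ := terminal_conv hInvN hterm
    have hreachP : Reaches P (pro (f 0)) (pro (f N)) := pro_run_reaches hfair.1 N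
    obtain ⟨hinP, hinitP⟩ := initial_pro hin' hinit
    rw [pro_map_bb] at hinitP
    obtain ⟨g, M, hgrun, hg0, hgD⟩ := exists_run_to_terminal hreachP htermP
    have hfairg : FairRun P g := fair_of_eventually_terminal hgrun htermP hgD
    obtain ⟨i, hi⟩ := hdec CI hCI (pro (f 0)) g hinitP hfairg hg0
    have hOD : P.O (pro (f N)).toFinset = some (φ CI) := by
      refine hi _ ?_
      have h1 := isRun_reaches hgrun i (max i M) (le_max_left _ _)
      rwa [hgD (max i M) (le_max_right _ _)] at h1
    exact ⟨N, fun C hC => by rw [honly C hC, conv_output]; exact hOD⟩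
  · -- state bound
    show ((P.Q.image ee ∪ P.I.image bb) ∪ {dd}).card ≤ P.Q.card + P.I.card + 1
    calc ((P.Q.image ee ∪ P.I.image bb) ∪ {dd}).card
        ≤ (P.Q.image ee ∪ P.I.image bb).card + ({dd} : Finset _).card :=
          Finset.card_union_le _ _
      _ ≤ (P.Q.image ee).card + (P.I.image bb).card + 1 := by
          have := Finset.card_union_le (P.Q.image ee) (P.I.image bb)
          simp only [Finset.card_singleton]
          omega
      _ ≤ P.Q.card + P.I.card + 1 := by
          have h1 := Finset.card_image_le (s := P.Q) (f := ee)
          have h2 := Finset.card_image_le (s := P.I) (f := bb)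
          omega
  · -- helper count
    show Multiset.card (P.H.map ee + {dd}) = Multiset.card P.H + 1
    simp
  · -- transition size bound
    have hdisj : Disjoint (P.δ.image (fun t => (t.1.map ee, t.2.map ee)))
        (P.I.image (fun q => (({bb q, dd} : Multiset _), ({ee q, dd} : Multiset _)))) := by
      rw [Finset.disjoint_left]
      rintro t ht ht'
      rcases Finset.mem_image.mp ht with ⟨u, _, rfl⟩
      rcases Finset.mem_image.mp ht' with ⟨q, _, heq⟩
      have : dd ∈ Multiset.map ee u.1 := by
        have := congrArg Prod.fst heq
        simp only at this
        rw [← this]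
        simp [Multiset.insert_eq_cons]
      rcases Multiset.mem_map.mp this with ⟨a, _, ha⟩
      exact ee_ne_dd a ha
    have hsplit : (conv P).δ = P.δ.image (fun t => (t.1.map ee, t.2.map ee)) ∪
        P.I.image (fun q => (({bb q, dd} : Multiset _), ({ee q, dd} : Multiset _))) := rfl
    rw [hsplit, Finset.sum_union hdisj]
    have h1 : (∑ t ∈ P.δ.image (fun t => (t.1.map ee, t.2.map ee)), Multiset.card t.1)
        = ∑ t ∈ P.δ, Multiset.card t.1 := by
      rw [Finset.sum_image]
      · simp
      · intro x _ y _ hxy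
        have h1 := congrArg Prod.fst hxy
        have h2 := congrArg Prod.snd hxy
        simp only at h1 h2
        exact Prod.ext (Multiset.map_injective ee_inj h1) (Multiset.map_injective ee_inj h2)
    have h2 : (∑ t ∈ P.I.image
          (fun q => (({bb q, dd} : Multiset _), ({ee q, dd} : Multiset _))), Multiset.card t.1)
        ≤ 2 * P.I.card := by
      calc (∑ t ∈ P.I.image
            (fun q => (({bb q, dd} : Multiset _), ({ee q, dd} : Multiset _))), Multiset.card t.1)
          ≤ ∑ _t ∈ P.I.image
            (fun q => (({bb q, dd} : Multiset _), ({ee q, dd} : Multiset _))), 2 := by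
            refine Finset.sum_le_sum ?_
            intro t ht
            rcases Finset.mem_image.mp ht with ⟨q, _, rfl⟩
            simp [Multiset.insert_eq_cons]
        _ = 2 * (P.I.image _).card := by rw [Finset.sum_const]; ring
        _ ≤ 2 * P.I.card := by
            have := Finset.card_image_le (s := P.I)
              (f := fun q => (({bb q, dd} : Multiset _), ({ee q, dd} : Multiset _)))
            omega
    omega
  · -- input states never produced
    intro t ht q hq hmem
    rcases Finset.mem_image.mp hq with ⟨p, _, rfl⟩
    rcases mem_conv_delta.mp ht with ⟨u, _, rfl⟩ | ⟨r, _, rfl⟩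
    · simp only at hmem
      rcases Multiset.mem_map.mp hmem with ⟨a, _, ha⟩
      exact bb_ne_ee p a ha.symm
    · simp only [Multiset.insert_eq_cons, Multiset.mem_cons, Multiset.mem_singleton] at hmem
      rcases hmem with h | h
      · exact bb_ne_ee p r h
      · exact bb_ne_dd p h
  · -- inputs are terminal
    intro C hC t ht hle
    rcases mem_conv_delta.mp ht with ⟨u, hu, rfl⟩ | ⟨r, _, rfl⟩
    · have hcard := (P.delta_card u hu).2
      have : ∃ x, x ∈ u.1 := Multiset.exists_mem_of_ne_zero (by
        intro h; rw [h] at hcard; simp at hcard)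
      obtain ⟨x, hx⟩ := this
      have : ee x ∈ C := Multiset.mem_of_le hle (Multiset.mem_map_of_mem ee hx)
      have := hC _ this
      rcases Finset.mem_image.mp this with ⟨p, _, hp⟩
      exact bb_ne_ee p x hp
    · have : dd ∈ C := Multiset.mem_of_le hle (by simp [Multiset.insert_eq_cons])
      have := hC _ this
      rcases Finset.mem_image.mp this with ⟨p, _, hp⟩
      exact bb_ne_dd p hp
  · -- input multiplicities at most one
    intro t ht q hq
    rcases Finset.mem_image.mp hq with ⟨p, _, rfl⟩
    rcases mem_conv_delta.mp ht with ⟨u, _, rfl⟩ | ⟨r, _, rfl⟩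
    · simp only
      have : bb p ∉ Multiset.map ee u.1 := by
        intro h
        rcases Multiset.mem_map.mp h with ⟨a, _, ha⟩
        exact bb_ne_ee p a ha.symm
      simp [Multiset.count_eq_zero.mpr this]
    · simp only [Multiset.insert_eq_cons, Multiset.count_cons, Multiset.count_singleton,
        Multiset.count_zero]
      rw [if_neg (bb_ne_dd p)]
      split_ifs <;> omega

end PaperPP
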